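/- arXiv:1706.07237 — 2 statements merged into one kernel-verified Lean document; each statement's English description precedes it below -/
import Mathlib

section
/- Suppose sup_n k_n < ∞ and that sup_{x∈ℝ} |S_{n,SUB}(x) − Φ(x/σ)| → 0 in probability (Condition (2)). Then sup_{x∈ℝ} |C_{n,k_n}(x) − Φ(x/σ)| → 0 in probability as n → ∞ if and only if m_{n,SUB} = ∫ x dS_{n,SUB}(x) → 0 in probability. -/
open MeasureTheory ProbabilityTheory Filter Set ENNReal

noncomputable section

namespace CS

/-- The standard normal CDF `Φ`. -/
def Phi (x : ℝ) : ℝ := ((gaussianReal 0 1) (Iic x)).toReal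

/-- Sup-distance between two functions on `ℝ`: `sup_x |F x - G x|`. -/
def supDist (F G : ℝ → ℝ) : ℝ := ⨆ x : ℝ, |F x - G x|

variable {Ω : Type*} [MeasurableSpace Ω]

/-- Convergence in probability (to a deterministic constant) of a sequence of
random real quantities. -/
def TendstoInProb (P : Measure Ω) (f : ℕ → Ω → ℝ) (c : ℝ) : Prop :=
  ∀ ε : ℝ, 0 < ε → Tendsto (fun n => P {ω | ε ≤ |f n ω - c|}) atTop (nhds 0)

variable (X : ℕ → Ω → ℝ) (t : (n : ℕ) → (Fin n → ℝ) → ℝ) (tP : ℝ) (τ : ℕ → ℝ) (b : ℕ → ℕ)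

/-- Number of length-`b` blocks: `N_n = n - b + 1`. -/
def Nn (n : ℕ) : ℕ := n - b n + 1

/-- The statistic computed on the full sample `X_0, ..., X_{n-1}`. -/
def stat (n : ℕ) (ω : Ω) : ℝ := t n (fun i => X (i : ℕ) ω)

/-- The normalized statistic `T_n = τ_n (t_n(X_1,...,X_n) - t(P))`. -/
def Tn (n : ℕ) (ω : Ω) : ℝ := τ n * (stat X t n ω - tP)

/-- The sampling CDF `F_n` of `T_n`. -/
def Fn (P : Measure Ω) (n : ℕ) (x : ℝ) : ℝ := (P {ω | Tn X t tP τ n ω ≤ x}).toReal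

/-- The `i`-th subsample statistic, centered at the full-sample statistic and scaled:
`τ_b [t_b(X_i,...,X_{i+b-1}) - t_n]`. -/
def subVal (n i : ℕ) (ω : Ω) : ℝ :=
  τ (b n) * (t (b n) (fun j => X (i + (j : ℕ)) ω) - stat X t n ω)

/-- The `i`-th subsample statistic centered at the parameter:
`T_{b,i} = τ_b [t_b(X_i,...,X_{i+b-1}) - t(P)]`. -/
def Tb (n i : ℕ) (ω : Ω) : ℝ :=
  τ (b n) * (t (b n) (fun j => X (i + (j : ℕ)) ω) - tP)

/-- The subsampling estimator `S_{n,SUB}` (a random CDF). -/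
def S (n : ℕ) (ω : Ω) (x : ℝ) : ℝ :=
  (Nn b n : ℝ)⁻¹ * ∑ i ∈ Finset.range (Nn b n),
    (if subVal X t τ b n i ω ≤ x then (1 : ℝ) else 0)

/-- The mean `m_{n,SUB}` of the subsampling distribution. -/
def mSub (n : ℕ) (ω : Ω) : ℝ :=
  (Nn b n : ℝ)⁻¹ * ∑ i ∈ Finset.range (Nn b n), subVal X t τ b n i ω

/-- The variance `σ̂²_{n,SUB}` of the subsampling distribution. -/
def varSub (n : ℕ) (ω : Ω) : ℝ :=
  (Nn b n : ℝ)⁻¹ * ∑ i ∈ Finset.range (Nn b n),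
    (subVal X t τ b n i ω - mSub X t τ b n ω) ^ 2

/-- The subsampling distribution `S_{n,SUB}` as a probability measure on `ℝ`
(the empirical measure of the subsample statistics). -/
def empMeas (n : ℕ) (ω : Ω) : Measure ℝ :=
  (Nn b n : ℝ≥0∞)⁻¹ • ∑ i ∈ Finset.range (Nn b n), Measure.dirac (subVal X t τ b n i ω)

/-- The convolved subsampling distribution: the law of
`Z*_n = k_n^{-1/2} Σ_{i=1}^{k_n} (Y*_{n,i} - m_{n,SUB})` where, given the data,
`Y*_{n,1},...,Y*_{n,k_n}` are i.i.d. with law `S_{n,SUB}`. -/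
def convMeas (k : ℕ → ℕ) (n : ℕ) (ω : Ω) : Measure ℝ :=
  (Measure.pi (fun _ : Fin (k n) => empMeas X t τ b n ω)).map
    (fun v => (∑ j, v j - (k n : ℝ) * mSub X t τ b n ω) / Real.sqrt (k n))

/-- The convolved subsampling estimator `C_{n,k_n}` (a random CDF). -/
def C (k : ℕ → ℕ) (n : ℕ) (ω : Ω) (x : ℝ) : ℝ :=
  (convMeas X t τ b k n ω (Iic x)).toReal

/-- The average subsample CDF `D_{n,b}(x) = N_n^{-1} Σ_i P(T_{b,i} ≤ x)`. -/
def D (P : Measure Ω) (n : ℕ) (x : ℝ) : ℝ :=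
  (Nn b n : ℝ)⁻¹ * ∑ i ∈ Finset.range (Nn b n), (P {ω | Tb X t tP τ b n i ω ≤ x}).toReal

/-- Condition (1): `T_n → N(0,σ²)` in distribution. -/
def Cond1 (P : Measure Ω) (σ : ℝ) : Prop :=
  ∀ x : ℝ, Tendsto (fun n => Fn X t tP τ P n x) atTop (nhds (Phi (x / σ)))

/-- Condition (2): `sup_x |S_{n,SUB}(x) - Φ(x/σ)| → 0` in probability. -/
def Cond2 (P : Measure Ω) (σ : ℝ) : Prop :=
  TendstoInProb P (fun n ω => supDist (S X t τ b n ω) (fun x => Phi (x / σ))) 0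

/-- Condition (3): for every `ε > 0`,
`lim_{m→∞} sup_{n≥m} P(N_n^{-1} Σ_i T_{b,i}² 1{|T_{b,i}| > m} > ε) = 0`. -/
def Cond3 (P : Measure Ω) : Prop :=
  ∀ ε : ℝ, 0 < ε →
    Tendsto (fun m : ℕ =>
        ⨆ n : ℕ, ⨆ _ : m ≤ n,
          P {ω | ε < (Nn b n : ℝ)⁻¹ * ∑ i ∈ Finset.range (Nn b n),
              (if (m : ℝ) < |Tb X t tP τ b n i ω| then (Tb X t tP τ b n i ω) ^ 2 else 0)})
      atTop (nhds 0)

/-- `T_n = o_p(τ_n/τ_b)`, i.e. `(τ_b/τ_n) T_n → 0` in probability. -/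
def SmallOp (P : Measure Ω) : Prop :=
  TendstoInProb P (fun n ω => Tn X t tP τ n ω * (τ (b n) / τ n)) 0

end CS

namespace CSAux
open CS NNReal




lemma Phi_nonneg (x : ℝ) : 0 ≤ Phi x := ENNReal.toReal_nonneg

lemma Phi_le_one (x : ℝ) : Phi x ≤ 1 := by
  have := measure_mono (μ := gaussianReal 0 1) (subset_univ (Iic x))
  simpa [Phi] using ENNReal.toReal_mono (by simp) this

lemma Phi_mono : Monotone Phi := by
  intro a b hab
  exact ENNReal.toReal_mono (measure_ne_top _ _) (measure_mono (Iic_subset_Iic.2 hab))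

lemma pdf01 (x : ℝ) : gaussianPDFReal 0 1 x = (Real.sqrt (2 * Real.pi))⁻¹ * Real.exp (-x^2/2) := by
  simp [gaussianPDFReal]

lemma sqrt_two_pi_ge_one : (1:ℝ) ≤ Real.sqrt (2 * Real.pi) := by
  rw [show (1:ℝ) = Real.sqrt 1 by simp]
  exact Real.sqrt_le_sqrt (by nlinarith [Real.pi_gt_three])

lemma gaussianPDFReal_le_one (x : ℝ) : gaussianPDFReal 0 1 x ≤ 1 := by
  rw [pdf01]
  have h2 : Real.exp (-x^2/2) ≤ 1 := by
    rw [Real.exp_le_one_iff]; nlinarith [sq_nonneg x]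
  have h1 : (Real.sqrt (2 * Real.pi))⁻¹ ≤ 1 := by
    rw [inv_le_one_iff₀]; right; exact sqrt_two_pi_ge_one
  calc (Real.sqrt (2 * Real.pi))⁻¹ * Real.exp (-x^2/2) ≤ 1 * 1 :=
        mul_le_mul h1 h2 (Real.exp_nonneg _) (by norm_num)
    _ = 1 := by norm_num

lemma Phi_sub_Phi (a u : ℝ) (h : a ≤ u) :
    Phi u - Phi a = ((gaussianReal 0 1) (Ioc a u)).toReal := by
  have heq : Iic u = Iic a ∪ Ioc a u := (Iic_union_Ioc_eq_Iic h).symm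
  have hd : Disjoint (Iic a) (Ioc a u) := by
    rw [Set.disjoint_left]
    intro x hx hx2
    exact absurd (hx : x ≤ a) (not_le.2 hx2.1)
  rw [Phi, Phi, heq, measure_union hd measurableSet_Ioc,
    ENNReal.toReal_add (measure_ne_top _ _) (measure_ne_top _ _)]
  ring

lemma Phi_lipschitz (a b : ℝ) : |Phi a - Phi b| ≤ |a - b| := by
  wlog hab : b ≤ a with H
  · rw [abs_sub_comm, abs_sub_comm a b]; exact H b a (le_of_not_ge hab)
  have hioc : (gaussianReal 0 1) (Ioc b a) ≤ ENNReal.ofReal (a - b) := by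
    rw [gaussianReal_apply 0 one_ne_zero]
    calc ∫⁻ x in Ioc b a, gaussianPDF 0 1 x
        ≤ ∫⁻ _ in Ioc b a, 1 := by
          refine setLIntegral_mono measurable_const fun x _ => ?_
          rw [gaussianPDF]
          exact ENNReal.ofReal_le_one.2 (gaussianPDFReal_le_one x)
      _ = volume (Ioc b a) := by simp
      _ = ENNReal.ofReal (a - b) := by simp [Real.volume_Ioc]
  have h1 : Phi a - Phi b = ((gaussianReal 0 1) (Ioc b a)).toReal := Phi_sub_Phi b a hab
  have h2 : 0 ≤ Phi a - Phi b := by rw [h1]; exact ENNReal.toReal_nonneg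
  rw [abs_of_nonneg h2, abs_of_nonneg (by linarith : (0:ℝ) ≤ a - b), h1]
  calc ((gaussianReal 0 1) (Ioc b a)).toReal ≤ (ENNReal.ofReal (a-b)).toReal :=
        ENNReal.toReal_mono ofReal_ne_top hioc
    _ = a - b := ENNReal.toReal_ofReal (by linarith)

lemma Phi_gap_pos (u : ℝ) (hu : 0 < u) : 0 < Phi u - Phi (-u) := by
  rw [Phi_sub_Phi (-u) u (by linarith)]
  have hpos : 0 < (gaussianReal 0 1) (Ioc (-u) u) := by
    rw [gaussianReal_apply 0 one_ne_zero]
    have hlb : ∀ x ∈ Ioc (-u) u,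
        ENNReal.ofReal (gaussianPDFReal 0 1 u) ≤ gaussianPDF 0 1 x := by
      intro x hx
      rw [gaussianPDF]
      refine ENNReal.ofReal_le_ofReal ?_
      rw [pdf01, pdf01]
      have hx2 : x^2 ≤ u^2 := by nlinarith [hx.1, hx.2]
      have : Real.exp (-u^2/2) ≤ Real.exp (-x^2/2) := by
        refine Real.exp_le_exp.2 (by linarith)
      have hs : (0:ℝ) < (Real.sqrt (2 * Real.pi))⁻¹ := by
        rw [inv_pos]; linarith [sqrt_two_pi_ge_one]
      nlinarith
    calc (0:ℝ≥0∞) < ENNReal.ofReal (gaussianPDFReal 0 1 u) * volume (Ioc (-u) u) := by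
          rw [Real.volume_Ioc]
          refine ENNReal.mul_pos ?_ ?_
          · exact ne_of_gt (ENNReal.ofReal_pos.2 (gaussianPDFReal_pos 0 1 u one_ne_zero))
          · exact ne_of_gt (ENNReal.ofReal_pos.2 (by linarith : (0:ℝ) < u - -u))
      _ = ∫⁻ _ in Ioc (-u) u, ENNReal.ofReal (gaussianPDFReal 0 1 u) := by
          rw [setLIntegral_const, mul_comm]
      _ ≤ ∫⁻ x in Ioc (-u) u, gaussianPDF 0 1 x :=
          setLIntegral_mono (measurable_gaussianPDFReal 0 1).ennreal_ofReal hlb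
  refine ENNReal.toReal_pos (ne_of_gt hpos) (measure_ne_top _ _)




/-- variance as an NNReal -/
def nvar (σ : ℝ) : ℝ≥0 := ⟨σ^2, sq_nonneg σ⟩

lemma nvar_ne_zero {σ : ℝ} (hσ : 0 < σ) : nvar σ ≠ 0 := by
  intro h
  have : σ^2 = 0 := congrArg Subtype.val h
  nlinarith

lemma gauss_scaled (σ : ℝ) (hσ : 0 < σ) (x : ℝ) :
    gaussianReal 0 (nvar σ) (Iic x) = gaussianReal 0 1 (Iic (x / σ)) := by
  have hmap : (gaussianReal 0 1).map (σ * ·) = gaussianReal 0 (nvar σ) := by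
    rw [gaussianReal_map_const_mul σ]
    congr 1
    · ring
    · ext; simp [nvar]; rfl
  rw [← hmap, Measure.map_apply (by fun_prop) measurableSet_Iic]
  congr 1
  ext y
  simp only [mem_preimage, mem_Iic]
  rw [le_div_iff₀ hσ]
  constructor <;> intro h <;> nlinarith

lemma gauss_scaled_toReal (σ : ℝ) (hσ : 0 < σ) (x : ℝ) :
    (gaussianReal 0 (nvar σ) (Iic x)).toReal = Phi (x / σ) := by
  rw [gauss_scaled σ hσ x]; rfl


lemma prod_withDensity {f g : ℝ → ℝ≥0∞} (hf : Measurable f) (hg : Measurable g)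
    [SigmaFinite (volume.withDensity f)] [SigmaFinite (volume.withDensity g)] :
    (volume.withDensity f).prod (volume.withDensity g) =
      (volume : Measure (ℝ × ℝ)).withDensity (fun p => f p.1 * g p.2) := by
  refine Measure.prod_eq fun s t hs ht => ?_
  rw [withDensity_apply _ (hs.prod ht), Measure.volume_eq_prod,
    ← Measure.prod_restrict,
    lintegral_prod_mul hf.aemeasurable hg.aemeasurable,
    withDensity_apply _ hs, withDensity_apply _ ht]

/-- map of a withDensity under a measurable equiv -/
lemma map_withDensity_equiv {α β : Type*} [MeasurableSpace α] [MeasurableSpace β]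
    (e : α ≃ᵐ β) (μ : Measure α) {f : β → ℝ≥0∞} (hf : Measurable f) :
    (μ.withDensity (f ∘ e)).map e = (μ.map e).withDensity f := by
  refine Measure.ext fun s hs => ?_
  rw [Measure.map_apply e.measurable hs, withDensity_apply _ (e.measurable hs),
    withDensity_apply _ hs, setLIntegral_map hs hf e.measurable]
  rfl

/-- the rotation by (c, s), c² + s² = 1, as a measurable equiv of ℝ × ℝ -/
def rotEquiv (c s : ℝ) (h : c^2 + s^2 = 1) : (ℝ × ℝ) ≃ᵐ (ℝ × ℝ) where
  toFun p := (c * p.1 + s * p.2, -s * p.1 + c * p.2)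
  invFun p := (c * p.1 - s * p.2, s * p.1 + c * p.2)
  left_inv p := by
    rw [Prod.ext_iff]
    refine ⟨by simp; linear_combination p.1 * h, by simp; linear_combination p.2 * h⟩
  right_inv p := by
    rw [Prod.ext_iff]
    refine ⟨by simp; linear_combination p.1 * h, by simp; linear_combination p.2 * h⟩
  measurable_toFun :=
    ((measurable_fst.const_mul c).add (measurable_snd.const_mul s)).prodMk
      ((measurable_fst.const_mul (-s)).add (measurable_snd.const_mul c))
  measurable_invFun :=
    ((measurable_fst.const_mul c).sub (measurable_snd.const_mul s)).prodMk
      ((measurable_fst.const_mul s).add (measurable_snd.const_mul c))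

/-- the rotation as a linear map -/
def rotLin (c s : ℝ) : (ℝ × ℝ) →ₗ[ℝ] (ℝ × ℝ) where
  toFun p := (c * p.1 + s * p.2, -s * p.1 + c * p.2)
  map_add' p q := by simp only [Prod.fst_add, Prod.snd_add, Prod.mk_add_mk, Prod.mk.injEq]; constructor <;> ring
  map_smul' r p := by simp only [Prod.smul_fst, Prod.smul_snd, RingHom.id_apply, Prod.smul_mk, smul_eq_mul, Prod.mk.injEq]; constructor <;> ring

lemma rotLin_det (c s : ℝ) : LinearMap.det (rotLin c s) = c^2 + s^2 := by
  rw [← LinearMap.det_toMatrix (Module.Basis.finTwoProd ℝ), Matrix.det_fin_two]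
  simp [LinearMap.toMatrix_apply, rotLin, Module.Basis.finTwoProd_zero, Module.Basis.finTwoProd_one]
  ring

lemma rot_volume (c s : ℝ) (h : c^2 + s^2 = 1) :
    (volume : Measure (ℝ × ℝ)).map (rotEquiv c s h) = volume := by
  have : ⇑(rotEquiv c s h) = ⇑(rotLin c s) := funext fun p => rfl
  rw [this, Measure.map_linearMap_addHaar_eq_smul_addHaar _ (by rw [rotLin_det]; rw [h]; norm_num),
    rotLin_det, h]
  norm_num



def F2 : ℝ × ℝ → ℝ≥0∞ := fun p => gaussianPDF 0 1 p.1 * gaussianPDF 0 1 p.2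

lemma sigmaFinite_wd : SigmaFinite (volume.withDensity (gaussianPDF 0 1)) := by
  rw [← gaussianReal_of_var_ne_zero 0 one_ne_zero]
  infer_instance

lemma g2_eq : (gaussianReal 0 1).prod (gaussianReal 0 1) =
    (volume : Measure (ℝ × ℝ)).withDensity F2 := by
  haveI := sigmaFinite_wd
  rw [gaussianReal_of_var_ne_zero 0 one_ne_zero]
  exact prod_withDensity (measurable_gaussianPDF 0 1) (measurable_gaussianPDF 0 1)

lemma F2_rot (c s : ℝ) (h : c^2 + s^2 = 1) : F2 ∘ (rotEquiv c s h) = F2 := by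
  funext p
  obtain ⟨x, y⟩ := p
  show gaussianPDF 0 1 (c * x + s * y) * gaussianPDF 0 1 (-s * x + c * y)
      = gaussianPDF 0 1 x * gaussianPDF 0 1 y
  rw [gaussianPDF, gaussianPDF, gaussianPDF, gaussianPDF,
    ← ENNReal.ofReal_mul (gaussianPDFReal_nonneg _ _ _),
    ← ENNReal.ofReal_mul (gaussianPDFReal_nonneg _ _ _)]
  congr 1
  rw [pdf01, pdf01, pdf01, pdf01]
  have harg : (c * x + s * y)^2 + (-s * x + c * y)^2 = x^2 + y^2 := by
    linear_combination (x^2 + y^2) * h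
  rw [mul_mul_mul_comm, mul_mul_mul_comm ((Real.sqrt (2 * Real.pi))⁻¹) (Real.exp (-x^2/2)),
    ← Real.exp_add, ← Real.exp_add]
  congr 1
  exact congrArg Real.exp (by linarith)

lemma rot_g2 (c s : ℝ) (h : c^2 + s^2 = 1) :
    ((gaussianReal 0 1).prod (gaussianReal 0 1)).map (rotEquiv c s h) =
      (gaussianReal 0 1).prod (gaussianReal 0 1) := by
  rw [g2_eq]
  conv_lhs => rw [show F2 = F2 ∘ (rotEquiv c s h) from (F2_rot c s h).symm]
  have hF2 : Measurable F2 :=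
    ((measurable_gaussianPDF 0 1).comp measurable_fst).mul
      ((measurable_gaussianPDF 0 1).comp measurable_snd)
  rw [map_withDensity_equiv (rotEquiv c s h) volume hF2, rot_volume c s h]

lemma rot_fst (c s : ℝ) (h : c^2 + s^2 = 1) :
    ((gaussianReal 0 1).prod (gaussianReal 0 1)).map (fun p => c * p.1 + s * p.2) =
      gaussianReal 0 1 := by
  have he : (fun p : ℝ × ℝ => c * p.1 + s * p.2) = Prod.fst ∘ (rotEquiv c s h) :=
    funext fun p => rfl
  rw [he, ← Measure.map_map measurable_fst (rotEquiv c s h).measurable, rot_g2 c s h,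
    Measure.map_fst_prod]
  simp

lemma gauss_map_sqrt_mul (a : ℝ≥0) :
    (gaussianReal 0 1).map ((Real.sqrt a) * ·) = gaussianReal 0 a := by
  rw [gaussianReal_map_const_mul]
  congr 1
  · ring
  · rw [mul_one]
    ext
    exact Real.sq_sqrt a.coe_nonneg

lemma gaussAdd (a b : ℝ≥0) :
    ((gaussianReal 0 a).prod (gaussianReal 0 b)).map (fun p => p.1 + p.2) =
      gaussianReal 0 (a + b) := by
  rcases eq_or_ne a 0 with ha | ha
  · subst ha
    rw [gaussianReal_zero_var, Measure.dirac_prod,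
      Measure.map_map (by fun_prop) (by fun_prop)]
    simp [Function.comp_def]
  rcases eq_or_ne b 0 with hb | hb
  · subst hb
    rw [gaussianReal_zero_var, Measure.prod_dirac,
      Measure.map_map (by fun_prop) (by fun_prop)]
    simp [Function.comp_def]
  have hab : (0:ℝ) < (a:ℝ) + (b:ℝ) := by
    have hA : (0:ℝ) < (a:ℝ) := NNReal.coe_pos.2 (lt_of_le_of_ne (by simp) (Ne.symm ha))
    linarith [b.coe_nonneg]
  set r : ℝ := Real.sqrt ((a:ℝ) + (b:ℝ)) with hr
  have hrpos : 0 < r := Real.sqrt_pos.2 hab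
  set c : ℝ := Real.sqrt a / r with hc
  set s : ℝ := Real.sqrt b / r with hs
  have hcs : c^2 + s^2 = 1 := by
    rw [hc, hs, div_pow, div_pow, Real.sq_sqrt a.coe_nonneg, Real.sq_sqrt b.coe_nonneg,
      hr, Real.sq_sqrt (le_of_lt hab)]
    field_simp
  have key : (fun p : ℝ × ℝ => Real.sqrt a * p.1 + Real.sqrt b * p.2)
      = (r * ·) ∘ (fun p : ℝ × ℝ => c * p.1 + s * p.2) := by
    funext p
    simp only [Function.comp_apply, hc, hs]
    field_simp
  calc ((gaussianReal 0 a).prod (gaussianReal 0 b)).map (fun p => p.1 + p.2)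
      = (((gaussianReal 0 1).map ((Real.sqrt a) * ·)).prod
          ((gaussianReal 0 1).map ((Real.sqrt b) * ·))).map (fun p => p.1 + p.2) := by
        rw [gauss_map_sqrt_mul, gauss_map_sqrt_mul]
    _ = (((gaussianReal 0 1).prod (gaussianReal 0 1)).map
          (Prod.map ((Real.sqrt a) * ·) ((Real.sqrt b) * ·))).map (fun p => p.1 + p.2) := by
        rw [Measure.map_prod_map _ _ (by fun_prop) (by fun_prop)]
    _ = ((gaussianReal 0 1).prod (gaussianReal 0 1)).map
          (fun p => Real.sqrt a * p.1 + Real.sqrt b * p.2) := by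
        rw [Measure.map_map (by fun_prop) (by fun_prop)]
        rfl
    _ = ((gaussianReal 0 1).prod (gaussianReal 0 1)).map
          ((r * ·) ∘ (fun p : ℝ × ℝ => c * p.1 + s * p.2)) := by rw [key]
    _ = (((gaussianReal 0 1).prod (gaussianReal 0 1)).map
          (fun p : ℝ × ℝ => c * p.1 + s * p.2)).map (r * ·) := by
        rw [Measure.map_map (by fun_prop) (by fun_prop)]
    _ = (gaussianReal 0 1).map (r * ·) := by rw [rot_fst c s hcs]
    _ = gaussianReal 0 (a + b) := by
        have : r = Real.sqrt ((a + b : ℝ≥0) : ℝ) := by rw [hr]; norm_num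
        rw [this, gauss_map_sqrt_mul]

lemma gaussSumPi (w : ℝ≥0) : ∀ k : ℕ,
    (Measure.pi fun _ : Fin k => gaussianReal 0 w).map (fun v => ∑ j, v j) =
      gaussianReal 0 (k * w)
  | 0 => by
    have h0 : (fun v : Fin 0 → ℝ => ∑ j, v j) = fun _ => (0:ℝ) := by
      funext v; simp
    rw [h0, Measure.map_const]
    simp [gaussianReal_zero_var]
  | (k+1) => by
    have hmp := measurePreserving_piFinSuccAbove (fun _ : Fin (k+1) => gaussianReal 0 w) 0
    have hsum : Measurable (fun v : Fin k → ℝ => ∑ j, v j) := by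
      apply Finset.measurable_sum
      exact fun j _ => measurable_pi_apply j
    have h1 : (fun v : Fin (k+1) → ℝ => ∑ j, v j)
        = (fun p : ℝ × (Fin k → ℝ) => p.1 + ∑ j, p.2 j)
          ∘ (MeasurableEquiv.piFinSuccAbove (fun _ => ℝ) 0) := by
      funext v
      exact Fin.sum_univ_succAbove v 0
    rw [h1, ← Measure.map_map (by fun_prop) (MeasurableEquiv.measurable _), hmp.map_eq]
    have h2 : (fun p : ℝ × (Fin k → ℝ) => p.1 + ∑ j, p.2 j)
        = (fun q : ℝ × ℝ => q.1 + q.2) ∘ (Prod.map id (fun v : Fin k → ℝ => ∑ j, v j)) := by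
      funext p; rfl
    rw [h2, ← Measure.map_map (by fun_prop) (measurable_id.prodMap hsum),
      ← Measure.map_prod_map _ _ measurable_id hsum, Measure.map_id, gaussSumPi w k,
      gaussAdd]
    congr 1
    push_cast
    ring


lemma pi_sum_mono {μ ν : Measure ℝ} [IsProbabilityMeasure μ] [IsProbabilityMeasure ν]
    (ε : ℝ≥0∞) (h : ∀ x : ℝ, μ (Iic x) ≤ ν (Iic x) + ε) :
    ∀ (k : ℕ) (c : ℝ),
      (Measure.pi fun _ : Fin k => μ) {v | ∑ j, v j ≤ c}
        ≤ (Measure.pi fun _ : Fin k => ν) {v | ∑ j, v j ≤ c} + k * ε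
  | 0, c => by
    by_cases hc : (0:ℝ) ≤ c
    · have : {v : Fin 0 → ℝ | ∑ j, v j ≤ c} = univ := by
        ext v; simp [hc]
      rw [this]
      simp [measure_univ]
    · have : {v : Fin 0 → ℝ | ∑ j, v j ≤ c} = ∅ := by
        ext v; simp [hc]
      rw [this]
      simp
  | (k+1), c => by
    have hsum : Measurable (fun v : Fin k → ℝ => ∑ j, v j) :=
      Finset.measurable_sum _ (fun j _ => measurable_pi_apply j)
    set B : Set (ℝ × (Fin k → ℝ)) := {p | p.1 + ∑ j, p.2 j ≤ c} with hB
    have hBm : MeasurableSet B :=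
      measurableSet_le (measurable_fst.add (hsum.comp measurable_snd)) measurable_const
    have hpre : ∀ (ρ : Measure ℝ) [IsProbabilityMeasure ρ],
        (Measure.pi fun _ : Fin (k+1) => ρ) {v | ∑ j, v j ≤ c} = (ρ.prod (Measure.pi fun _ : Fin k => ρ)) B := by
      intro ρ hρ
      have hmp := measurePreserving_piFinSuccAbove (fun _ : Fin (k+1) => ρ) 0
      rw [← hmp.map_eq, Measure.map_apply (MeasurableEquiv.measurable _) hBm]
      congr 1
      ext v
      simp only [mem_preimage, hB, mem_setOf_eq]
      rw [show ((MeasurableEquiv.piFinSuccAbove (fun _ => ℝ) 0) v)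
          = (v 0, fun j => v (Fin.succAbove 0 j)) from rfl,
        Fin.sum_univ_succAbove v 0]
    rw [hpre μ, hpre ν]
    have slice1 : ∀ y : Fin k → ℝ, (fun x => (x, y)) ⁻¹' B = Iic (c - ∑ j, y j) := by
      intro y; ext x; simp [hB, mem_Iic]; constructor <;> intro <;> linarith
    have slice2 : ∀ x : ℝ, Prod.mk x ⁻¹' B = {y : Fin k → ℝ | ∑ j, y j ≤ c - x} := by
      intro x; ext y; simp [hB]; constructor <;> intro <;> linarith
    calc (μ.prod (Measure.pi fun _ : Fin k => μ)) B
        = ∫⁻ y, μ ((fun x => (x, y)) ⁻¹' B) ∂(Measure.pi fun _ : Fin k => μ) :=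
          Measure.prod_apply_symm hBm
      _ = ∫⁻ y, μ (Iic (c - ∑ j, y j)) ∂(Measure.pi fun _ : Fin k => μ) := by
          refine lintegral_congr fun y => by rw [slice1 y]
      _ ≤ ∫⁻ y, (ν (Iic (c - ∑ j, y j)) + ε) ∂(Measure.pi fun _ : Fin k => μ) :=
          lintegral_mono fun y => h _
      _ = (∫⁻ y, ν (Iic (c - ∑ j, y j)) ∂(Measure.pi fun _ : Fin k => μ)) + ε := by
          rw [lintegral_add_right _ measurable_const, lintegral_const, measure_univ, mul_one]
      _ = (ν.prod (Measure.pi fun _ : Fin k => μ)) B + ε := by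
          rw [Measure.prod_apply_symm hBm]
          congr 1
          exact lintegral_congr fun y => by rw [slice1 y]
      _ = (∫⁻ x, (Measure.pi fun _ : Fin k => μ) {y : Fin k → ℝ | ∑ j, y j ≤ c - x} ∂ν) + ε := by
          rw [Measure.prod_apply hBm]
          congr 1
          exact lintegral_congr fun x => by rw [slice2 x]
      _ ≤ (∫⁻ x, ((Measure.pi fun _ : Fin k => ν) {y : Fin k → ℝ | ∑ j, y j ≤ c - x} + k * ε) ∂ν) + ε := by
          exact add_le_add (lintegral_mono fun x => pi_sum_mono ε h k (c - x)) le_rfl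
      _ = ((∫⁻ x, (Measure.pi fun _ : Fin k => ν) {y : Fin k → ℝ | ∑ j, y j ≤ c - x} ∂ν) + k * ε) + ε := by
          rw [lintegral_add_right _ measurable_const, lintegral_const, measure_univ, mul_one]
      _ = (ν.prod (Measure.pi fun _ : Fin k => ν)) B + (k+1 : ℕ) * ε := by
          rw [Measure.prod_apply hBm]
          have : (∫⁻ x, (Measure.pi fun _ : Fin k => ν) (Prod.mk x ⁻¹' B) ∂ν)
              = ∫⁻ x, (Measure.pi fun _ : Fin k => ν) {y : Fin k → ℝ | ∑ j, y j ≤ c - x} ∂ν :=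
            lintegral_congr fun x => by rw [slice2 x]
          rw [this, add_assoc]
          congr 1
          push_cast
          ring


section Emp
variable {Ω : Type*} [MeasurableSpace Ω]
variable (X : ℕ → Ω → ℝ) (t : (n : ℕ) → (Fin n → ℝ) → ℝ) (τ : ℕ → ℝ) (b : ℕ → ℕ)

lemma Nn_pos (n : ℕ) : 0 < Nn b n := Nat.succ_pos _

lemma Nn_cast_ne_zero (n : ℕ) : ((Nn b n : ℝ≥0∞)) ≠ 0 := by
  exact_mod_cast (Nn_pos b n).ne'

instance empMeas_prob (n : ℕ) (ω : Ω) : IsProbabilityMeasure (empMeas X t τ b n ω) := by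
  constructor
  rw [empMeas, Measure.smul_apply, Measure.coe_finset_sum, Finset.sum_apply]
  simp only [Measure.dirac_apply_of_mem (mem_univ _)]
  rw [Finset.sum_const, Finset.card_range, nsmul_eq_mul, mul_one, smul_eq_mul]
  exact ENNReal.inv_mul_cancel (Nn_cast_ne_zero b n) (natCast_ne_top _)

lemma S_eq (n : ℕ) (ω : Ω) (x : ℝ) :
    S X t τ b n ω x = ((empMeas X t τ b n ω) (Iic x)).toReal := by
  rw [S, empMeas, Measure.smul_apply, Measure.coe_finset_sum, Finset.sum_apply, smul_eq_mul,
    ENNReal.toReal_mul, ENNReal.toReal_inv, ENNReal.toReal_natCast, ENNReal.toReal_sum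
      (fun i _ => measure_ne_top _ _)]
  congr 1
  refine Finset.sum_congr rfl fun i _ => ?_
  rw [Measure.dirac_apply' _ measurableSet_Iic]
  by_cases h : subVal X t τ b n i ω ≤ x
  · simp [h, indicator_of_mem, mem_Iic]
  · simp [h, mem_Iic]

lemma S_nonneg (n : ℕ) (ω : Ω) (x : ℝ) : 0 ≤ S X t τ b n ω x := by
  rw [S_eq]; exact ENNReal.toReal_nonneg

lemma S_le_one (n : ℕ) (ω : Ω) (x : ℝ) : S X t τ b n ω x ≤ 1 := by
  rw [S_eq]
  exact ENNReal.toReal_le_of_le_ofReal zero_le_one (by simpa using prob_le_one)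

lemma convFun_measurable (kk : ℕ) (a : ℝ) :
    Measurable (fun v : Fin kk → ℝ => (∑ j, v j - a) / Real.sqrt kk) := by
  apply Measurable.div_const
  exact (Finset.measurable_sum _ fun j _ => measurable_pi_apply j).sub measurable_const

instance convMeas_prob (k : ℕ → ℕ) (n : ℕ) (ω : Ω) :
    IsProbabilityMeasure (convMeas X t τ b k n ω) := by
  rw [convMeas]
  exact Measure.isProbabilityMeasure_map (convFun_measurable _ _).aemeasurable

lemma C_nonneg (k : ℕ → ℕ) (n : ℕ) (ω : Ω) (x : ℝ) : 0 ≤ C X t τ b k n ω x :=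
  ENNReal.toReal_nonneg

lemma C_le_one (k : ℕ → ℕ) (n : ℕ) (ω : Ω) (x : ℝ) : C X t τ b k n ω x ≤ 1 := by
  rw [C]
  exact ENNReal.toReal_le_of_le_ofReal zero_le_one (by simpa using prob_le_one)

lemma C_eq (k : ℕ → ℕ) (n : ℕ) (ω : Ω) (hk : 1 ≤ k n) (x : ℝ) :
    C X t τ b k n ω x = ((Measure.pi fun _ : Fin (k n) => empMeas X t τ b n ω)
      {v | ∑ j, v j ≤ Real.sqrt (k n) * x + (k n) * mSub X t τ b n ω}).toReal := by
  have hs : (0:ℝ) < Real.sqrt (k n) := Real.sqrt_pos.2 (by exact_mod_cast hk)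
  rw [C, convMeas, Measure.map_apply (convFun_measurable _ _) measurableSet_Iic]
  congr 2
  ext v
  simp only [mem_preimage, mem_Iic, mem_setOf_eq]
  rw [div_le_iff₀ hs]
  constructor <;> intro h <;> nlinarith

end Emp

lemma ennreal_le_of_abs {a b : ℝ≥0∞} (ha : a ≠ ⊤) {δ : ℝ}
    (h : |a.toReal - b.toReal| ≤ δ) : a ≤ b + ENNReal.ofReal δ := by
  have hδ : 0 ≤ δ := le_trans (abs_nonneg _) h
  have h' : a.toReal ≤ b.toReal + δ := by linarith [(abs_le.1 h).2]
  calc a = ENNReal.ofReal a.toReal := (ENNReal.ofReal_toReal ha).symm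
    _ ≤ ENNReal.ofReal (b.toReal + δ) := ENNReal.ofReal_le_ofReal h'
    _ = ENNReal.ofReal b.toReal + ENNReal.ofReal δ :=
        ENNReal.ofReal_add ENNReal.toReal_nonneg hδ
    _ ≤ b + ENNReal.ofReal δ := add_le_add ENNReal.ofReal_toReal_le le_rfl

lemma ennreal_abs_toReal_le {a b e : ℝ≥0∞} (ha : a ≠ ⊤) (hb : b ≠ ⊤) (he : e ≠ ⊤)
    (h1 : a ≤ b + e) (h2 : b ≤ a + e) : |a.toReal - b.toReal| ≤ e.toReal := by
  rw [abs_le]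
  have k1 : a.toReal ≤ b.toReal + e.toReal := by
    rw [← ENNReal.toReal_add hb he]
    exact ENNReal.toReal_mono (by finiteness) h1
  have k2 : b.toReal ≤ a.toReal + e.toReal := by
    rw [← ENNReal.toReal_add ha he]
    exact ENNReal.toReal_mono (by finiteness) h2
  constructor <;> linarith

lemma key_close {Ω : Type*} [MeasurableSpace Ω]
    (X : ℕ → Ω → ℝ) (t : (n : ℕ) → (Fin n → ℝ) → ℝ) (τ : ℕ → ℝ) (b : ℕ → ℕ)
    (σ : ℝ) (hσ : 0 < σ) (n : ℕ) (ω : Ω) (kk : ℕ → ℕ) (hk : 1 ≤ kk n)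
    (δ : ℝ) (hδ : 0 ≤ δ)
    (hS : ∀ x : ℝ, |S X t τ b n ω x - Phi (x / σ)| ≤ δ) (x : ℝ) :
    |C X t τ b kk n ω x - Phi ((x + Real.sqrt (kk n) * mSub X t τ b n ω) / σ)|
      ≤ (kk n) * δ := by
  set μ := empMeas X t τ b n ω with hμ
  set γ := gaussianReal 0 (nvar σ) with hγ
  have hkpos : (0:ℝ) < (kk n : ℝ) := by exact_mod_cast hk
  have hs : (0:ℝ) < Real.sqrt (kk n) := Real.sqrt_pos.2 hkpos
  have hss : Real.sqrt (kk n) * Real.sqrt (kk n) = (kk n : ℝ) :=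
    Real.mul_self_sqrt (le_of_lt hkpos)
  have h1 : ∀ y : ℝ, μ (Iic y) ≤ γ (Iic y) + ENNReal.ofReal δ := by
    intro y
    have hre := hS y
    rw [S_eq, ← gauss_scaled_toReal σ hσ y] at hre
    exact ennreal_le_of_abs (measure_ne_top _ _) hre
  have h2 : ∀ y : ℝ, γ (Iic y) ≤ μ (Iic y) + ENNReal.ofReal δ := by
    intro y
    have hre := hS y
    rw [S_eq, ← gauss_scaled_toReal σ hσ y] at hre
    rw [abs_sub_comm] at hre
    exact ennreal_le_of_abs (measure_ne_top _ _) hre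
  set m := mSub X t τ b n ω with hm
  set c := Real.sqrt (kk n) * x + (kk n) * m with hc
  set A := {v : Fin (kk n) → ℝ | ∑ j, v j ≤ c} with hA
  have hπ1 := pi_sum_mono (ENNReal.ofReal δ) h1 (kk n) c
  have hπ2 := pi_sum_mono (ENNReal.ofReal δ) h2 (kk n) c
  have hγA : (Measure.pi fun _ : Fin (kk n) => γ) A
      = gaussianReal 0 ((kk n) * nvar σ) (Iic c) := by
    rw [← gaussSumPi (nvar σ) (kk n), Measure.map_apply
      (Finset.measurable_sum _ fun j _ => measurable_pi_apply j) measurableSet_Iic]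
    rfl
  have hvar : ((kk n) : ℝ≥0) * nvar σ = nvar (Real.sqrt (kk n) * σ) := by
    ext
    show ((kk n : ℝ≥0) : ℝ) * σ^2 = (Real.sqrt (kk n) * σ)^2
    push_cast
    rw [mul_pow]
    rw [show Real.sqrt (kk n) ^ 2 = (kk n : ℝ) by rw [sq]; exact hss]
  have htR : ((Measure.pi fun _ : Fin (kk n) => γ) A).toReal
      = Phi ((x + Real.sqrt (kk n) * m) / σ) := by
    rw [hγA, hvar, gauss_scaled_toReal _ (by positivity)]
    congr 1
    rw [div_eq_div_iff (by positivity : Real.sqrt (kk n) * σ ≠ 0) (ne_of_gt hσ), hc]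
    linear_combination (-(m * σ)) * hss
  have hCx : C X t τ b kk n ω x = ((Measure.pi fun _ : Fin (kk n) => μ) A).toReal :=
    C_eq X t τ b kk n ω hk x
  rw [hCx, ← htR]
  have := ennreal_abs_toReal_le (measure_ne_top _ _) (measure_ne_top _ _)
    (mul_ne_top (natCast_ne_top _) ofReal_ne_top) hπ1 hπ2
  calc |((Measure.pi fun _ : Fin (kk n) => μ) A).toReal
        - ((Measure.pi fun _ : Fin (kk n) => γ) A).toReal|
      ≤ ((kk n : ℝ≥0∞) * ENNReal.ofReal δ).toReal := this
    _ = (kk n) * δ := by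
        rw [ENNReal.toReal_mul, ENNReal.toReal_natCast, ENNReal.toReal_ofReal hδ]

lemma supDist_nonneg (F G : ℝ → ℝ) : 0 ≤ supDist F G :=
  Real.iSup_nonneg (fun x => abs_nonneg _)

lemma supDist_le {F G : ℝ → ℝ} {a : ℝ} (h : ∀ x, |F x - G x| ≤ a) : supDist F G ≤ a :=
  ciSup_le h

lemma le_supDist {F G : ℝ → ℝ} {M : ℝ} (h : ∀ x, |F x - G x| ≤ M) (x0 : ℝ) :
    |F x0 - G x0| ≤ supDist F G :=
  le_ciSup ⟨M, by rintro y ⟨x, rfl⟩; exact h x⟩ x0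

lemma Phi_shift_le {σ : ℝ} (hσ : 0 < σ) (x c : ℝ) :
    |Phi ((x + c) / σ) - Phi (x / σ)| ≤ |c| / σ := by
  refine le_trans (Phi_lipschitz _ _) ?_
  rw [div_sub_div_same, show x + c - x = c by ring, abs_div, abs_of_pos hσ]

lemma Phi_gap_lb {u e : ℝ} (he : 0 ≤ e) (h : e ≤ |u|) :
    Phi e - Phi (-e) ≤ |Phi u - Phi (-u)| := by
  rcases le_or_gt 0 u with hu | hu
  · rw [abs_of_nonneg hu] at h
    have h1 : Phi e ≤ Phi u := Phi_mono h
    have h2 : Phi (-u) ≤ Phi (-e) := Phi_mono (by linarith)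
    have h3 : Phi (-u) ≤ Phi u := Phi_mono (by linarith)
    rw [abs_of_nonneg (by linarith)]
    linarith
  · rw [abs_of_neg hu] at h
    have h1 : Phi e ≤ Phi (-u) := Phi_mono h
    have h2 : Phi u ≤ Phi (-e) := Phi_mono (by linarith)
    have h3 : Phi u ≤ Phi (-u) := Phi_mono (by linarith)
    rw [abs_of_nonpos (by linarith)]
    linarith

lemma squeeze_prob {Ω : Type*} [MeasurableSpace Ω] (P : Measure Ω)
    {E A B : ℕ → Set Ω} (h : ∀ n, E n ⊆ A n ∪ B n)
    (hA : Tendsto (fun n => P (A n)) atTop (nhds 0))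
    (hB : Tendsto (fun n => P (B n)) atTop (nhds 0)) :
    Tendsto (fun n => P (E n)) atTop (nhds 0) := by
  have hsum : Tendsto (fun n => P (A n) + P (B n)) atTop (nhds 0) := by
    have := hA.add hB
    simpa using this
  refine tendsto_of_tendsto_of_tendsto_of_le_of_le tendsto_const_nhds hsum
    (fun n => bot_le) (fun n => (measure_mono (h n)).trans (measure_union_le _ _))

end CSAux

open CS MeasureTheory Filter

open CSAux

theorem stmt1 {Ω : Type*} [MeasurableSpace Ω] (P : Measure Ω) [IsProbabilityMeasure P]
    (X : ℕ → Ω → ℝ) (hX : ∀ i, Measurable (X i))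
    (t : (n : ℕ) → (Fin n → ℝ) → ℝ) (ht : ∀ n, Measurable (t n))
    (τ : ℕ → ℝ) (hτ : ∀ n, 0 < τ n)
    (b : ℕ → ℕ) (hb : ∀ n, 2 ≤ n → 1 ≤ b n ∧ b n < n)
    (σ : ℝ) (hσ : 0 < σ)
    (k : ℕ → ℕ) (hk : ∀ n, 0 < k n) (hksup : ∃ K : ℕ, ∀ n, k n ≤ K)
    (h2 : Cond2 X t τ b P σ) :
    TendstoInProb P (fun n ω => supDist (C X t τ b k n ω) (fun x => Phi (x / σ))) 0 ↔
      TendstoInProb P (mSub X t τ b) 0 := by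
  classical
  obtain ⟨K, hK⟩ := hksup
  have hK1 : 1 ≤ K := le_trans (hk 0) (hK 0)
  have hKpos : (0:ℝ) < (K:ℝ) := by exact_mod_cast lt_of_lt_of_le one_pos hK1
  have hsK : (0:ℝ) < Real.sqrt K := Real.sqrt_pos.2 hKpos
  have hSbd : ∀ (n : ℕ) (ω : Ω) (x : ℝ), |S X t τ b n ω x - Phi (x / σ)| ≤ 1 := fun n ω x =>
    abs_le.2 ⟨by linarith [S_nonneg X t τ b n ω x, Phi_le_one (x/σ)],
              by linarith [S_le_one X t τ b n ω x, Phi_nonneg (x/σ)]⟩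
  have hCbd : ∀ (n : ℕ) (ω : Ω) (x : ℝ), |C X t τ b k n ω x - Phi (x / σ)| ≤ 1 := fun n ω x =>
    abs_le.2 ⟨by linarith [C_nonneg X t τ b k n ω x, Phi_le_one (x/σ)],
              by linarith [C_le_one X t τ b k n ω x, Phi_nonneg (x/σ)]⟩
  constructor
  · intro hC ε hε
    have hηpos : 0 < Phi (ε/(2*σ)) - Phi (-(ε/(2*σ))) := Phi_gap_pos _ (by positivity)
    set η := Phi (ε/(2*σ)) - Phi (-(ε/(2*σ))) with hηdef
    set δ := η / (2*(K+1)) with hδdef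
    have hδpos : 0 < δ := by positivity
    have hincl : ∀ n, {ω | ε ≤ |mSub X t τ b n ω - 0|} ⊆
        {ω | δ ≤ |supDist (S X t τ b n ω) (fun x => Phi (x / σ)) - 0|} ∪
        {ω | δ ≤ |supDist (C X t τ b k n ω) (fun x => Phi (x / σ)) - 0|} := by
      intro n ω hω
      simp only [mem_setOf_eq, mem_union] at hω ⊢
      by_contra hno
      push_neg at hno
      obtain ⟨hnS, hnC⟩ := hno
      rw [sub_zero, abs_of_nonneg (supDist_nonneg _ _)] at hnS hnC
      rw [sub_zero] at hω
      have hSpt : ∀ x, |S X t τ b n ω x - Phi (x / σ)| ≤ δ := fun x =>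
        le_trans (le_supDist (hSbd n ω) x) (le_of_lt hnS)
      have hCpt : ∀ x, |C X t τ b k n ω x - Phi (x / σ)| ≤ δ := fun x =>
        le_trans (le_supDist (hCbd n ω) x) (le_of_lt hnC)
      have hkey := key_close X t τ b σ hσ n ω k (hk n) δ (le_of_lt hδpos) hSpt
      set m := mSub X t τ b n ω with hmdef
      set c := Real.sqrt (k n) * m with hcdef
      have h1k : (1:ℝ) ≤ Real.sqrt (k n) := by
        rw [show (1:ℝ) = Real.sqrt 1 by simp]
        exact Real.sqrt_le_sqrt (by exact_mod_cast hk n)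
      have hcε : ε ≤ |c| := by
        rw [hcdef, abs_mul, abs_of_nonneg (by linarith : (0:ℝ) ≤ Real.sqrt (k n))]
        calc ε ≤ |m| := hω
          _ = 1 * |m| := (one_mul _).symm
          _ ≤ Real.sqrt (k n) * |m| := mul_le_mul_of_nonneg_right h1k (abs_nonneg m)
      set x0 := -c/2 with hx0
      have harg1 : (x0 + c)/σ = c/(2*σ) := by rw [hx0]; field_simp; ring
      have harg2 : x0/σ = -(c/(2*σ)) := by rw [hx0]; field_simp
      have hgap : η ≤ |Phi ((x0+c)/σ) - Phi (x0/σ)| := by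
        rw [harg1, harg2, hηdef]
        have habs : ε/(2*σ) ≤ |c/(2*σ)| := by
          rw [abs_div, abs_of_pos (by positivity : (0:ℝ) < 2*σ)]
          gcongr
        exact Phi_gap_lb (by positivity) habs
      have hchain : |Phi ((x0+c)/σ) - Phi (x0/σ)| ≤ (k n : ℝ) * δ + δ :=
        calc |Phi ((x0+c)/σ) - Phi (x0/σ)|
            ≤ |Phi ((x0+c)/σ) - C X t τ b k n ω x0| + |C X t τ b k n ω x0 - Phi (x0/σ)| :=
              abs_sub_le _ _ _
          _ ≤ (k n : ℝ) * δ + δ := add_le_add (by rw [abs_sub_comm]; exact hkey x0) (hCpt x0)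
      have hkK : (k n : ℝ) ≤ (K:ℝ) := by exact_mod_cast hK n
      have hfin : (k n : ℝ) * δ + δ ≤ (K+1) * δ := by nlinarith
      have hhalf : ((K:ℝ)+1) * δ = η/2 := by
        rw [hδdef]; field_simp
      linarith [hgap.trans (hchain.trans hfin)]
    exact squeeze_prob P hincl (h2 δ hδpos) (hC δ hδpos)
  · intro hm ε hε
    set δ1 := ε/(4*K) with hδ1
    set δ2 := σ*ε/(4*Real.sqrt K) with hδ2
    have hδ1pos : 0 < δ1 := by positivity
    have hδ2pos : 0 < δ2 := by positivity
    have hincl : ∀ n, {ω | ε ≤ |supDist (C X t τ b k n ω) (fun x => Phi (x / σ)) - 0|} ⊆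
        {ω | δ1 ≤ |supDist (S X t τ b n ω) (fun x => Phi (x / σ)) - 0|} ∪
        {ω | δ2 ≤ |mSub X t τ b n ω - 0|} := by
      intro n ω hω
      simp only [mem_setOf_eq, mem_union] at hω ⊢
      by_contra hno
      push_neg at hno
      obtain ⟨hnS, hnm⟩ := hno
      rw [sub_zero, abs_of_nonneg (supDist_nonneg _ _)] at hnS
      rw [sub_zero, abs_of_nonneg (supDist_nonneg _ _)] at hω
      rw [sub_zero] at hnm
      have hSpt : ∀ x, |S X t τ b n ω x - Phi (x / σ)| ≤ δ1 := fun x =>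
        le_trans (le_supDist (hSbd n ω) x) (le_of_lt hnS)
      have hkey := key_close X t τ b σ hσ n ω k (hk n) δ1 (le_of_lt hδ1pos) hSpt
      set m := mSub X t τ b n ω with hmdef
      set c := Real.sqrt (k n) * m with hcdef
      have hkK : (k n : ℝ) ≤ (K:ℝ) := by exact_mod_cast hK n
      have hskK : Real.sqrt (k n) ≤ Real.sqrt K := Real.sqrt_le_sqrt hkK
      have hcbd : |c| ≤ Real.sqrt K * δ2 := by
        rw [hcdef, abs_mul, abs_of_nonneg (Real.sqrt_nonneg _)]
        exact mul_le_mul hskK (le_of_lt hnm) (abs_nonneg _) (le_of_lt hsK)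
      have hpt : ∀ x, |C X t τ b k n ω x - Phi (x / σ)| ≤ (K:ℝ) * δ1 + Real.sqrt K * δ2 / σ := by
        intro x
        calc |C X t τ b k n ω x - Phi (x / σ)|
            ≤ |C X t τ b k n ω x - Phi ((x + c)/σ)| + |Phi ((x + c)/σ) - Phi (x/σ)| :=
              abs_sub_le _ _ _
          _ ≤ (k n : ℝ) * δ1 + |c|/σ := add_le_add (hkey x) (Phi_shift_le hσ x c)
          _ ≤ (K:ℝ) * δ1 + Real.sqrt K * δ2 / σ := by
              refine add_le_add (mul_le_mul_of_nonneg_right hkK (le_of_lt hδ1pos)) ?_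
              gcongr
      have hsup : supDist (C X t τ b k n ω) (fun x => Phi (x / σ))
          ≤ (K:ℝ) * δ1 + Real.sqrt K * δ2 / σ := supDist_le hpt
      have heval : (K:ℝ) * δ1 + Real.sqrt K * δ2 / σ = ε/2 := by
        rw [hδ1, hδ2]; field_simp; ring
      rw [heval] at hsup
      linarith [hω.trans hsup]
    exact squeeze_prob P hincl (h2 δ1 hδ1pos) (hm δ2 hδ2pos)
end
end

section
/- Let {X_n} be a sequence of real-valued random variables with finite variances and X a real-valued random variable with finite variance, such that X_n → X in distribution and Var(X_n) → Var(X) < ∞ as n → ∞. Then E X_n → E X ∈ ℝ and E X_n² → E X² < ∞. -/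
open MeasureTheory ProbabilityTheory Filter Set

set_option linter.unusedSectionVars false

section Aux
variable {Ω : Type*} [MeasurableSpace Ω] (P : Measure Ω) [IsProbabilityMeasure P]

lemma aux_layer (Y : Ω → ℝ) (hInt : Integrable Y P) :
    ∫ ω, Y ω ∂P = (∫ t in Ioi (0:ℝ), (P {ω | t < Y ω}).toReal)
      - ∫ t in Ioi (0:ℝ), (P {ω | Y ω ≤ -t}).toReal := by
  have hpos : Integrable (fun ω => max (Y ω) 0) P := hInt.pos_part
  have hneg : Integrable (fun ω => max (-Y ω) 0) P := hInt.neg.pos_part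
  have h1 : ∫ ω, max (Y ω) 0 ∂P = ∫ t in Ioi (0:ℝ), (P {ω | t < Y ω}).toReal := by
    rw [hpos.integral_eq_integral_meas_lt (Eventually.of_forall fun ω => le_max_right _ _)]
    refine setIntegral_congr_fun measurableSet_Ioi fun t ht => ?_
    congr 2
    ext ω
    simp only [mem_setOf_eq, lt_max_iff]
    exact ⟨fun h => h.resolve_right (not_lt.mpr ht.le), Or.inl⟩
  have h2 : ∫ ω, max (-Y ω) 0 ∂P = ∫ t in Ioi (0:ℝ), (P {ω | Y ω ≤ -t}).toReal := by
    rw [hneg.integral_eq_integral_meas_le (Eventually.of_forall fun ω => le_max_right _ _)]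
    refine setIntegral_congr_fun measurableSet_Ioi fun t ht => ?_
    congr 2
    ext ω
    simp only [mem_setOf_eq, le_max_iff]
    constructor
    · rintro (h | h)
      · linarith
      · exact absurd h (not_le.mpr ht)
    · intro h; left; linarith
  have key : ∫ ω, Y ω ∂P = ∫ ω, (max (Y ω) 0 - max (-Y ω) 0) ∂P := by
    refine integral_congr_ae (Eventually.of_forall fun ω => ?_)
    simp [max_zero_sub_max_neg_zero_eq_self]
  rw [key, integral_sub hpos hneg, h1, h2]

lemma aux_tail (Y : Ω → ℝ) (hInt2 : Integrable (fun ω => (Y ω)^2) P) {t : ℝ} (ht : 0 < t)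
    {s : Set Ω} (hs : s ⊆ {ω | t ≤ |Y ω|}) :
    (P s).toReal ≤ (∫ ω, (Y ω)^2 ∂P) / t^2 := by
  have key := mul_meas_ge_le_integral_of_nonneg (μ := P)
    (Eventually.of_forall fun ω => sq_nonneg (Y ω)) hInt2 (t^2)
  have hsub : s ⊆ {ω | t^2 ≤ (Y ω)^2} := fun ω hω => by
    have h1 := hs hω
    have := pow_le_pow_left₀ ht.le h1 2
    simpa [sq_abs] using this
  have hm : (P s).toReal ≤ (P {ω | t^2 ≤ (Y ω)^2}).toReal :=
    ENNReal.toReal_mono (measure_ne_top P _) (measure_mono hsub)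
  rw [le_div_iff₀ (by positivity)]
  calc (P s).toReal * t^2 ≤ (P {ω | t^2 ≤ (Y ω)^2}).toReal * t^2 := by
        nlinarith [sq_nonneg t]
    _ ≤ ∫ ω, (Y ω)^2 ∂P := by rw [mul_comm]; exact key

lemma aux_le_one (s : Set Ω) : (P s).toReal ≤ 1 := by
  have : (P s).toReal ≤ (P univ).toReal :=
    ENNReal.toReal_mono (measure_ne_top P _) (measure_mono (subset_univ _))
  simpa using this

lemma aux_compl (Y : Ω → ℝ) (hY : Measurable Y) (t : ℝ) :
    (P {ω | t < Y ω}).toReal = 1 - (P {ω | Y ω ≤ t}).toReal := by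
  have hset : {ω | t < Y ω} = {ω | Y ω ≤ t}ᶜ := by ext ω; simp [not_le]
  have hmeas : MeasurableSet {ω | Y ω ≤ t} := hY measurableSet_Iic
  rw [hset, measure_compl hmeas (measure_ne_top P _), measure_univ,
    ENNReal.toReal_sub_of_le prob_le_one ENNReal.one_ne_top]
  simp

end Aux

set_option maxHeartbeats 1000000 in
/-- Lemma 1: if `X_n → X` in distribution and `Var(X_n) → Var(X) < ∞`, then
`E X_n → E X` and `E X_n² → E X²`. Convergence in distribution is formalized as
convergence of CDFs at every continuity point of the limit CDF. -/
theorem stmt18 {Ω : Type*} [MeasurableSpace Ω] (P : Measure Ω) [IsProbabilityMeasure P]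
    (Xn : ℕ → Ω → ℝ) (X : Ω → ℝ)
    (hXn : ∀ n, Measurable (Xn n)) (hX : Measurable X)
    -- finite variances (finite second moments)
    (hL2n : ∀ n, MemLp (Xn n) 2 P) (hL2 : MemLp X 2 P)
    -- X_n → X in distribution
    (hdist : ∀ x : ℝ, ContinuousAt (fun y => (P {ω | X ω ≤ y}).toReal) x →
      Tendsto (fun n => (P {ω | Xn n ω ≤ x}).toReal) atTop
        (nhds ((P {ω | X ω ≤ x}).toReal)))
    -- Var(X_n) → Var(X)
    (hvar : Tendsto (fun n => variance (Xn n) P) atTop (nhds (variance X P))) :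
    Tendsto (fun n => ∫ ω, Xn n ω ∂P) atTop (nhds (∫ ω, X ω ∂P)) ∧
      Tendsto (fun n => ∫ ω, (Xn n ω) ^ 2 ∂P) atTop (nhds (∫ ω, (X ω) ^ 2 ∂P)) := by
  classical
  set F : ℝ → ℝ := fun x => (P {ω | X ω ≤ x}).toReal with hFdef
  have hFmono : Monotone F := fun x y hxy =>
    ENNReal.toReal_mono (measure_ne_top P _) (measure_mono fun ω h => le_trans h hxy)
  have hD : {x | ¬ ContinuousAt F x}.Countable := hFmono.countable_not_continuousAt
  have hIntn : ∀ n, Integrable (Xn n) P := fun n => (hL2n n).integrable one_le_two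
  have hIntX : Integrable X P := hL2.integrable one_le_two
  have hInt2n : ∀ n, Integrable (fun ω => (Xn n ω)^2) P := fun n => (hL2n n).integrable_sq
  have hInt2X : Integrable (fun ω => (X ω)^2) P := hL2.integrable_sq
  -- Step 1: choose a good point a
  obtain ⟨k₁, hk₁⟩ : ∃ k : ℕ, 7/8 < F k := by
    have hu : Tendsto (fun k : ℕ => P {ω | X ω ≤ (k:ℝ)}) atTop
        (nhds (P (⋃ k : ℕ, {ω | X ω ≤ (k:ℝ)}))) :=
      tendsto_measure_iUnion_atTop (fun i j hij ω h => by simp only [mem_setOf_eq] at h ⊢; exact le_trans h (Nat.cast_le.mpr hij))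
    have huniv : (⋃ k : ℕ, {ω | X ω ≤ (k:ℝ)}) = univ := by
      ext ω
      simp only [mem_iUnion, mem_univ, iff_true, mem_setOf_eq]
      exact exists_nat_ge (X ω)
    rw [huniv, measure_univ] at hu
    have h2 := (ENNReal.tendsto_toReal ENNReal.one_ne_top).comp hu
    simp only [Function.comp_def, ENNReal.toReal_one] at h2
    exact (h2.eventually_const_lt (by norm_num)).exists
  obtain ⟨k₂, hk₂⟩ : ∃ k : ℕ, F (-(k:ℝ)) < 1/8 := by
    have hi : Tendsto (fun k : ℕ => P {ω | X ω ≤ -(k:ℝ)}) atTop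
        (nhds (P (⋂ k : ℕ, {ω | X ω ≤ -(k:ℝ)}))) := by
      refine tendsto_measure_iInter_atTop
        (fun k => ((hX measurableSet_Iic).nullMeasurableSet))
        (fun i j hij ω h => by simp only [mem_setOf_eq] at h ⊢; exact le_trans h (neg_le_neg (Nat.cast_le.mpr hij))) ⟨0, measure_ne_top P _⟩
    have hempty : (⋂ k : ℕ, {ω | X ω ≤ -(k:ℝ)}) = ∅ := by
      ext ω
      simp only [mem_iInter, mem_setOf_eq, mem_empty_iff_false, iff_false, not_forall, not_le]
      obtain ⟨k, hk⟩ := exists_nat_gt (-(X ω))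
      exact ⟨k, by linarith⟩
    rw [hempty, measure_empty] at hi
    have h2 := (ENNReal.tendsto_toReal ENNReal.zero_ne_top).comp hi
    simp only [Function.comp_def, ENNReal.toReal_zero] at h2
    exact (h2.eventually_lt_const (by norm_num)).exists
  obtain ⟨a, haB, har⟩ : ∃ x ∈ ({x | ¬ ContinuousAt F x} ∪ Neg.neg ⁻¹' {x | ¬ ContinuousAt F x})ᶜ,
      x ∈ Ioi (max 1 (max (k₁:ℝ) (k₂:ℝ))) := by
    have hdense : Dense ({x | ¬ ContinuousAt F x} ∪ Neg.neg ⁻¹' {x | ¬ ContinuousAt F x})ᶜ :=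
      (hD.union (hD.preimage neg_injective)).dense_compl ℝ
    exact hdense.exists_mem_open isOpen_Ioi nonempty_Ioi
  have ha1 : (1:ℝ) < a := lt_of_le_of_lt (le_max_left _ _) har
  have ha_pos : (0:ℝ) < a := by linarith
  have hca : ContinuousAt F a := by
    simp only [compl_union, mem_inter_iff, mem_compl_iff, mem_setOf_eq, not_not] at haB
    exact haB.1
  have hcna : ContinuousAt F (-a) := by
    simp only [compl_union, mem_inter_iff, mem_compl_iff, mem_preimage, mem_setOf_eq,
      not_not] at haB
    exact haB.2
  have hFa : 7/8 < F a :=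
    lt_of_lt_of_le hk₁ (hFmono (le_of_lt (lt_of_le_of_lt ((le_max_left _ _).trans
      (le_max_right 1 _)) har)))
  have hFna : F (-a) < 1/8 :=
    lt_of_le_of_lt (hFmono (by
      have : (k₂:ℝ) < a := lt_of_le_of_lt ((le_max_right _ _).trans (le_max_right 1 _)) har
      linarith)) hk₂
  -- Step 2: eventual bounds
  set V : ℝ := variance X P + 1 with hVdef
  have hV_pos : 0 < V := by
    have := variance_nonneg X P
    linarith
  have hVb : ∀ᶠ n in atTop, variance (Xn n) P ≤ V := hvar.eventually_le_const (lt_add_one _)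
  have hFan : ∀ᶠ n in atTop, 3/4 < (P {ω | Xn n ω ≤ a}).toReal :=
    (hdist a hca).eventually_const_lt (by change (3:ℝ)/4 < F a; linarith)
  have hFnan : ∀ᶠ n in atTop, (P {ω | Xn n ω ≤ -a}).toReal < 1/4 :=
    (hdist (-a) hcna).eventually_lt_const (by change F (-a) < (1:ℝ)/4; linarith)
  have hmean : ∀ᶠ n in atTop, |∫ ω, Xn n ω ∂P| ≤ a + Real.sqrt (2*V) := by
    filter_upwards [hVb, hFan, hFnan] with n hVn hFa' hFna'
    by_contra hcon
    push_neg at hcon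
    set m : ℝ := ∫ ω, Xn n ω ∂P with hmdef
    set S : Set Ω := {ω | Xn n ω ≤ a} \ {ω | Xn n ω ≤ -a} with hSdef
    have hSsub : {ω | Xn n ω ≤ -a} ⊆ {ω | Xn n ω ≤ a} := fun ω h => by
      simp only [mem_setOf_eq] at h ⊢; linarith
    have hSmeas : MeasurableSet S :=
      ((hXn n) measurableSet_Iic).diff ((hXn n) measurableSet_Iic)
    have hPS : 1/2 ≤ (P S).toReal := by
      rw [hSdef, measure_diff hSsub ((hXn n) measurableSet_Iic).nullMeasurableSet
        (measure_ne_top P _),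
        ENNReal.toReal_sub_of_le (measure_mono hSsub) (measure_ne_top P _)]
      linarith
    have hvar_eq : variance (Xn n) P = ∫ ω, (Xn n ω - m)^2 ∂P := by
      rw [variance_eq_integral (hXn n).aemeasurable]
    have hIntsq : Integrable (fun ω => (Xn n ω - m)^2) P :=
      ((hL2n n).sub (memLp_const m)).integrable_sq
    have hlow : (|m| - a)^2 * (P S).toReal ≤ ∫ ω in S, (Xn n ω - m)^2 ∂P := by
      rw [mul_comm]
      show P.real S • (|m| - a)^2 ≤ ∫ ω in S, (Xn n ω - m)^2 ∂P
      refine setIntegral_ge_of_const_le hSmeas (measure_ne_top P _) (fun ω hω => ?_)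
        hIntsq.integrableOn
      have h1 : Xn n ω ≤ a := hω.1
      have h2 : ¬ Xn n ω ≤ -a := hω.2
      have habs : |Xn n ω| ≤ a := abs_le.2 ⟨by push_neg at h2; linarith, h1⟩
      have hd : |m| - a ≤ |Xn n ω - m| := by
        have := abs_sub_abs_le_abs_sub m (Xn n ω)
        have h3 : |m - Xn n ω| = |Xn n ω - m| := abs_sub_comm _ _
        linarith
      have hnn : 0 ≤ |m| - a := by
        have := Real.sqrt_nonneg (2*V)
        linarith [le_of_lt hcon]
      calc (|m| - a)^2 ≤ |Xn n ω - m|^2 := pow_le_pow_left₀ hnn hd 2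
        _ = (Xn n ω - m)^2 := sq_abs _
    have hup : ∫ ω in S, (Xn n ω - m)^2 ∂P ≤ ∫ ω, (Xn n ω - m)^2 ∂P :=
      setIntegral_le_integral hIntsq (Eventually.of_forall fun ω => sq_nonneg _)
    have hsq : 2*V < (|m| - a)^2 := by
      have h1 : Real.sqrt (2*V) < |m| - a := by linarith
      have h2 : Real.sqrt (2*V) ^ 2 = 2*V := Real.sq_sqrt (by positivity)
      nlinarith [Real.sqrt_nonneg (2*V)]
    nlinarith [hPS, hlow, hup, hvar_eq ▸ hVn]
  set C : ℝ := V + (a + Real.sqrt (2*V))^2 with hCdef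
  have hC_pos : 0 < C := by positivity
  have hsecond : ∀ᶠ n in atTop, ∫ ω, (Xn n ω)^2 ∂P ≤ C := by
    filter_upwards [hmean, hVb] with n hm hVn
    have hvd : variance (Xn n) P = (∫ ω, (Xn n ω)^2 ∂P) - (∫ ω, Xn n ω ∂P)^2 := by
      rw [variance_eq_sub (hL2n n)]
      rfl
    have hm2 : (∫ ω, Xn n ω ∂P)^2 ≤ (a + Real.sqrt (2*V))^2 := by
      rw [← sq_abs]
      exact pow_le_pow_left₀ (abs_nonneg _) hm 2
    linarith
  -- Step 3: DCT
  set g : ℝ → ℝ := fun t => min 1 (C / t^2) with hgdef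
  have hg_nonneg : ∀ t : ℝ, 0 < t → 0 ≤ g t := fun t ht => le_min zero_le_one (by positivity)
  have hg_meas : Measurable g :=
    measurable_const.min (measurable_const.div ((measurable_id.pow_const 2)))
  have hgint : IntegrableOn g (Ioi (0:ℝ)) := by
    have h01 : IntegrableOn g (Ioc (0:ℝ) 1) := by
      refine Measure.integrableOn_of_bounded (M := 1) measure_Ioc_lt_top.ne
        hg_meas.aestronglyMeasurable ?_
      refine (ae_restrict_iff' measurableSet_Ioc).2 (Eventually.of_forall fun t ht => ?_)
      rw [Real.norm_eq_abs, abs_of_nonneg (hg_nonneg t ht.1)]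
      exact min_le_left _ _
    have h1i : IntegrableOn g (Ioi (1:ℝ)) := by
      have hbase : IntegrableOn (fun t : ℝ => C * t^(-2:ℝ)) (Ioi (1:ℝ)) :=
        (integrableOn_Ioi_rpow_of_lt (by norm_num) one_pos).const_mul C
      refine Integrable.mono hbase hg_meas.aestronglyMeasurable ?_
      refine (ae_restrict_iff' measurableSet_Ioi).2 (Eventually.of_forall fun t ht => ?_)
      have ht0 : (0:ℝ) < t := lt_trans one_pos ht
      rw [Real.norm_eq_abs, abs_of_nonneg (hg_nonneg t ht0), Real.norm_eq_abs]
      have hrw : C * t^(-2:ℝ) = C / t^2 := by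
        rw [Real.rpow_neg ht0.le, Real.rpow_two]
        ring
      rw [hrw, abs_of_nonneg (by positivity)]
      exact min_le_right _ _
    have : Ioi (0:ℝ) = Ioc (0:ℝ) 1 ∪ Ioi 1 := (Ioc_union_Ioi_eq_Ioi zero_le_one).symm
    rw [this]
    exact h01.union h1i
  -- A part
  have hA : Tendsto (fun n => ∫ t in Ioi (0:ℝ), (P {ω | t < Xn n ω}).toReal) atTop
      (nhds (∫ t in Ioi (0:ℝ), (P {ω | t < X ω}).toReal)) := by
    refine tendsto_integral_filter_of_dominated_convergence g ?_ ?_ hgint ?_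
    · refine Eventually.of_forall fun n => Measurable.aestronglyMeasurable ?_
      have hanti : Antitone (fun t : ℝ => P {ω | t < Xn n ω}) := fun s t hst =>
        measure_mono fun ω h => lt_of_le_of_lt hst h
      exact hanti.measurable.ennreal_toReal
    · filter_upwards [hsecond] with n hCn
      refine (ae_restrict_iff' measurableSet_Ioi).2 (Eventually.of_forall fun t ht => ?_)
      rw [Real.norm_eq_abs, abs_of_nonneg ENNReal.toReal_nonneg]
      refine le_min (aux_le_one P _) ?_
      calc (P {ω | t < Xn n ω}).toReal
          ≤ (∫ ω, (Xn n ω)^2 ∂P) / t^2 :=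
            aux_tail P (Xn n) (hInt2n n) ht
              (fun ω h => by
                simp only [mem_setOf_eq] at h ⊢
                exact le_trans (le_of_lt h) (le_abs_self _))
        _ ≤ C / t^2 := by gcongr
    · refine ae_restrict_of_ae ?_
      filter_upwards [hD.ae_notMem volume] with t ht
      have hct : ContinuousAt F t := not_not.mp ht
      have h := hdist t hct
      have heq : ∀ n, (P {ω | t < Xn n ω}).toReal = 1 - (P {ω | Xn n ω ≤ t}).toReal :=
        fun n => aux_compl P (Xn n) (hXn n) t
      have heqX : (P {ω | t < X ω}).toReal = 1 - (P {ω | X ω ≤ t}).toReal :=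
        aux_compl P X hX t
      simp only [heq, heqX]
      exact tendsto_const_nhds.sub h
  -- B part
  have hB : Tendsto (fun n => ∫ t in Ioi (0:ℝ), (P {ω | Xn n ω ≤ -t}).toReal) atTop
      (nhds (∫ t in Ioi (0:ℝ), (P {ω | X ω ≤ -t}).toReal)) := by
    refine tendsto_integral_filter_of_dominated_convergence g ?_ ?_ hgint ?_
    · refine Eventually.of_forall fun n => Measurable.aestronglyMeasurable ?_
      have hanti : Antitone (fun t : ℝ => P {ω | Xn n ω ≤ -t}) := fun s t hst =>
        measure_mono fun ω h => by simp only [mem_setOf_eq] at h ⊢; linarith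
      exact hanti.measurable.ennreal_toReal
    · filter_upwards [hsecond] with n hCn
      refine (ae_restrict_iff' measurableSet_Ioi).2 (Eventually.of_forall fun t ht => ?_)
      rw [Real.norm_eq_abs, abs_of_nonneg ENNReal.toReal_nonneg]
      refine le_min (aux_le_one P _) ?_
      calc (P {ω | Xn n ω ≤ -t}).toReal
          ≤ (∫ ω, (Xn n ω)^2 ∂P) / t^2 :=
            aux_tail P (Xn n) (hInt2n n) ht
              (fun ω h => by
                simp only [mem_setOf_eq] at h ⊢
                have h2 : t ≤ -(Xn n ω) := by linarith
                exact le_trans h2 (neg_le_abs _))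
        _ ≤ C / t^2 := by gcongr
    · refine ae_restrict_of_ae ?_
      filter_upwards [(hD.preimage (neg_injective)).ae_notMem volume] with t ht
      have hct : ContinuousAt F (-t) := not_not.mp ht
      exact hdist (-t) hct
  -- conclude first part
  have hmeanconv : Tendsto (fun n => ∫ ω, Xn n ω ∂P) atTop (nhds (∫ ω, X ω ∂P)) := by
    have h := hA.sub hB
    have e1 : ∀ n, ∫ ω, Xn n ω ∂P
        = (∫ t in Ioi (0:ℝ), (P {ω | t < Xn n ω}).toReal)
          - ∫ t in Ioi (0:ℝ), (P {ω | Xn n ω ≤ -t}).toReal :=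
      fun n => aux_layer P _ (hIntn n)
    have e2 : ∫ ω, X ω ∂P
        = (∫ t in Ioi (0:ℝ), (P {ω | t < X ω}).toReal)
          - ∫ t in Ioi (0:ℝ), (P {ω | X ω ≤ -t}).toReal := aux_layer P _ hIntX
    rw [e2]
    exact Tendsto.congr (fun n => (e1 n).symm) h
  refine ⟨hmeanconv, ?_⟩
  have e3 : ∀ n, ∫ ω, (Xn n ω)^2 ∂P = variance (Xn n) P + (∫ ω, Xn n ω ∂P)^2 := by
    intro n
    have : variance (Xn n) P = (∫ ω, (Xn n ω)^2 ∂P) - (∫ ω, Xn n ω ∂P)^2 := by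
      rw [variance_eq_sub (hL2n n)]; rfl
    linarith
  have e4 : ∫ ω, (X ω)^2 ∂P = variance X P + (∫ ω, X ω ∂P)^2 := by
    have : variance X P = (∫ ω, (X ω)^2 ∂P) - (∫ ω, X ω ∂P)^2 := by
      rw [variance_eq_sub hL2]; rfl
    linarith
  rw [e4]
  exact Tendsto.congr (fun n => (e3 n).symm) (hvar.add (hmeanconv.pow 2))
end
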